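/- Let G be a finite directed acyclic graph with a unique source s, and let N = (I - A)^{-1} be the path-counting matrix. Then vertex j dominates vertex k if and only if N_{sk} = N_{sj} · N_{jk}. -/

import Mathlib

/-- `l` is the list of successive vertices (after `j`) of a directed path from `j` to `k`. -/
def IsPathList {n : ℕ} (A : Matrix (Fin n) (Fin n) ℚ) (j k : Fin n) (l : List (Fin n)) : Prop :=
  List.Chain (fun a b => A a b = 1) j l ∧ (j :: l).getLast (List.cons_ne_nil _ _) = k

/-- `j` dominates `k` (with respect to the source `s`): every path from `s` to `k`
passes through `j`. -/
def Dominates {n : ℕ} (A : Matrix (Fin n) (Fin n) ℚ) (s j k : Fin n) : Prop :=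
  ∀ l : List (Fin n), IsPathList A s k l → j ∈ s :: l

namespace Stmt1Aux
variable {n : ℕ}

lemma isPathList_iff (A : Matrix (Fin n) (Fin n) ℚ) (j k : Fin n) (l : List (Fin n)) :
    IsPathList A j k l ↔
      List.Chain (fun a b => A a b = 1) j l ∧ (j :: l).getLast? = some k := by
  rw [IsPathList, List.getLast?_eq_getLast (List.cons_ne_nil _ _)]
  simp

/-- Finset of path lists of length `m` from `j` to `k`. -/
def pf (A : Matrix (Fin n) (Fin n) ℚ) : ℕ → Fin n → Fin n → Finset (List (Fin n))
  | 0, j, k => if j = k then {[]} else ∅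
  | m+1, j, k =>
      Finset.univ.biUnion fun u =>
        if A j u = 1 then (pf A m u k).image (List.cons u) else ∅

lemma mem_pf {A : Matrix (Fin n) (Fin n) ℚ} {m : ℕ} {j k : Fin n} {l : List (Fin n)} :
    l ∈ pf A m j k ↔ IsPathList A j k l ∧ l.length = m := by
  induction m generalizing j l with
  | zero =>
      rw [isPathList_iff]
      constructor
      · intro h
        rw [pf] at h
        split_ifs at h with hjk
        · simp at h
          subst h; subst hjk; simp
          exact List.IsChain.singleton _
        · simp at h
      · rintro ⟨⟨-, hlast⟩, hlen⟩
        rw [List.length_eq_zero_iff] at hlen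
        subst hlen
        simp at hlast
        rw [pf]
        simp [hlast]
  | succ m ih =>
      rw [isPathList_iff, pf]
      simp only [Finset.mem_biUnion, Finset.mem_univ, true_and]
      constructor
      · rintro ⟨u, hu⟩
        split_ifs at hu with hedge
        · simp only [Finset.mem_image] at hu
          obtain ⟨l', hl', rfl⟩ := hu
          obtain ⟨⟨hc, hlast⟩, hlen⟩ := (ih.mp hl').imp (fun h => (isPathList_iff _ _ _ _).mp h) id
          refine ⟨⟨List.Chain.cons hedge hc, ?_⟩, by simp [hlen]⟩
          rwa [List.getLast?_cons_cons]
        · simp at hu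
      · rintro ⟨⟨hc, hlast⟩, hlen⟩
        cases l with
        | nil => simp at hlen
        | cons u l' =>
          rcases hc with _ | _ | ⟨hedge, hc'⟩
          refine ⟨u, ?_⟩
          rw [if_pos hedge]
          simp only [Finset.mem_image]
          refine ⟨l', ih.mpr ⟨(isPathList_iff _ _ _ _).mpr ⟨hc', ?_⟩, by simpa using hlen⟩, rfl⟩
          rwa [List.getLast?_cons_cons] at hlast

lemma card_pf {A : Matrix (Fin n) (Fin n) ℚ} (h01 : ∀ j k, A j k = 0 ∨ A j k = 1)
    (m : ℕ) (j k : Fin n) : ((pf A m j k).card : ℚ) = (A ^ m) j k := by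
  induction m generalizing j with
  | zero =>
      rw [pf, pow_zero, Matrix.one_apply]
      split_ifs <;> simp
  | succ m ih =>
      rw [pow_succ', Matrix.mul_apply, pf]
      rw [Finset.card_biUnion]
      · push_cast
        refine Finset.sum_congr rfl fun u _ => ?_
        rcases h01 j u with h | h
        · rw [h, if_neg (by norm_num), zero_mul]
          simp
        · rw [h, if_pos rfl, one_mul, Finset.card_image_of_injective _ (List.cons_injective), ih]
      · intro x _ y _ hxy
        rw [Function.onFun, Finset.disjoint_left]
        intro l hlx hly
        split_ifs at hlx hly <;> simp only [Finset.mem_image, Finset.notMem_empty] at hlx hly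
        · obtain ⟨_, _, rfl⟩ := hlx
          obtain ⟨_, _, h⟩ := hly
          exact hxy (List.head_eq_of_cons_eq h.symm)
lemma length_lt {A : Matrix (Fin n) (Fin n) ℚ} (h01 : ∀ j k, A j k = 0 ∨ A j k = 1)
    {M : ℕ} (hM : A ^ M = 0) {j k : Fin n} {l : List (Fin n)}
    (hp : IsPathList A j k l) : l.length < M := by
  by_contra hle
  push_neg at hle
  have hz : A ^ l.length = 0 := by
    obtain ⟨d, hd⟩ := Nat.exists_eq_add_of_le hle
    rw [hd, pow_add, hM, zero_mul]
  have hmem : l ∈ pf A l.length j k := mem_pf.mpr ⟨hp, rfl⟩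
  have hc : ((pf A l.length j k).card : ℚ) = 0 := by rw [card_pf h01, hz]; rfl
  rw [Nat.cast_eq_zero, Finset.card_eq_zero] at hc
  rw [hc] at hmem
  exact absurd hmem (Finset.notMem_empty _)

/-- Rank of a vertex: the maximal length of a path starting at `v`. -/
noncomputable def rho (A : Matrix (Fin n) (Fin n) ℚ) (M : ℕ) (hM0 : 0 < M) (v : Fin n) : ℕ :=
  ((Finset.range M).filter fun m => ∃ k, (pf A m v k).Nonempty).max'
    ⟨0, by
      simp only [Finset.mem_filter, Finset.mem_range]
      exact ⟨hM0, v, [], mem_pf.mpr ⟨⟨List.Chain.nil, rfl⟩, rfl⟩⟩⟩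

lemma rho_lt {A : Matrix (Fin n) (Fin n) ℚ} (h01 : ∀ j k, A j k = 0 ∨ A j k = 1)
    {M : ℕ} (hM : A ^ M = 0) (hM0 : 0 < M) {a b : Fin n} (hedge : A a b = 1) :
    rho A M hM0 b < rho A M hM0 a := by
  have hmem := Finset.max'_mem _ (((Finset.range M).filter
    fun m => ∃ k, (pf A m b k).Nonempty).nonempty_of_ne_empty ?hne)
  case hne => exact Finset.nonempty_iff_ne_empty.mp ⟨0, by
      simp only [Finset.mem_filter, Finset.mem_range]
      exact ⟨hM0, b, [], mem_pf.mpr ⟨⟨List.Chain.nil, rfl⟩, rfl⟩⟩⟩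
  rw [Finset.mem_filter] at hmem
  obtain ⟨-, k, l, hl⟩ := hmem
  obtain ⟨⟨hc, hlast⟩, hlen⟩ := mem_pf.mp hl
  have hp : IsPathList A a k (b :: l) := by
    refine ⟨List.Chain.cons hedge hc, ?_⟩
    rw [List.getLast_cons (List.cons_ne_nil _ _)]
    exact hlast
  have hmem2 : b :: l ∈ pf A (rho A M hM0 b + 1) a k := by
    apply mem_pf.mpr
    exact ⟨hp, by simp [hlen, rho]⟩
  have hlt : rho A M hM0 b + 1 < M := by
    have := length_lt h01 hM hp
    simpa [hlen, rho] using this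
  have : rho A M hM0 b + 1 ≤ rho A M hM0 a := by
    apply Finset.le_max'
    rw [Finset.mem_filter]
    exact ⟨Finset.mem_range.mpr hlt, k, ⟨b :: l, hmem2⟩⟩
  omega

lemma path_nodup {A : Matrix (Fin n) (Fin n) ℚ} (h01 : ∀ j k, A j k = 0 ∨ A j k = 1)
    {M : ℕ} (hM : A ^ M = 0) (hM0 : 0 < M) {j k : Fin n} {l : List (Fin n)}
    (hp : IsPathList A j k l) : (j :: l).Nodup := by
  have hc : List.Chain (fun a b => rho A M hM0 b < rho A M hM0 a) j l :=
    List.IsChain.imp (fun ⦃a b⦄ h => rho_lt h01 hM hM0 h) hp.1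
  have : IsTrans (Fin n) (fun a b => rho A M hM0 b < rho A M hM0 a) :=
    ⟨fun a b c h1 h2 => lt_trans h2 h1⟩
  have hpw := List.isChain_iff_pairwise.mp hc
  exact hpw.imp fun {a b} h => by rintro rfl; exact lt_irrefl _ h

lemma path_append {A : Matrix (Fin n) (Fin n) ℚ} {a b c : Fin n} {p q : List (Fin n)}
    (hp : IsPathList A a b p) (hq : IsPathList A b c q) : IsPathList A a c (p ++ q) := by
  induction p generalizing a with
  | nil =>
      obtain ⟨-, hlast⟩ := hp
      simp at hlast
      subst hlast
      simpa using hq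
  | cons x p ih =>
      rw [isPathList_iff] at hp ⊢
      obtain ⟨hc, hlast⟩ := hp
      rcases hc with _ | _ | ⟨hedge, hc'⟩
      rw [List.getLast?_cons_cons] at hlast
      have hxp : IsPathList A x b p := (isPathList_iff _ _ _ _).mpr ⟨hc', hlast⟩
      obtain ⟨hc2, hlast2⟩ := (isPathList_iff _ _ _ _).mp (ih hxp)
      exact ⟨List.Chain.cons hedge hc2, by rwa [List.cons_append, List.getLast?_cons_cons]⟩

lemma path_split {A : Matrix (Fin n) (Fin n) ℚ} {a b c : Fin n} {p q : List (Fin n)}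
    (h : IsPathList A a c (p ++ b :: q)) :
    IsPathList A a b (p ++ [b]) ∧ IsPathList A b c q := by
  rw [isPathList_iff] at h
  obtain ⟨hc, hlast⟩ := h
  rw [List.Chain, List.isChain_cons_split] at hc
  obtain ⟨hc1, hc2⟩ := hc
  have hlast2 : (b :: q).getLast? = some c := by
    rw [show a :: (p ++ b :: q) = (a :: p) ++ b :: q by simp,
      List.getLast?_append] at hlast
    obtain ⟨x, hx⟩ : ∃ x, (b :: q).getLast? = some x :=
      ⟨_, List.getLast?_eq_getLast (List.cons_ne_nil _ _)⟩
    rw [hx] at hlast; simp at hlast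
    rw [hx, hlast]
  refine ⟨(isPathList_iff _ _ _ _).mpr ⟨hc1, ?_⟩, (isPathList_iff _ _ _ _).mpr ⟨hc2, hlast2⟩⟩
  rw [show a :: (p ++ [b]) = (a :: p) ++ [b] by simp, List.getLast?_concat]

lemma inv_one_sub {A : Matrix (Fin n) (Fin n) ℚ} {M : ℕ} (hM : A ^ M = 0) :
    (1 - A)⁻¹ = ∑ m ∈ Finset.range M, A ^ m := by
  apply Matrix.inv_eq_right_inv
  have : (1 - A) * ∑ m ∈ Finset.range M, A ^ m
      = ∑ m ∈ Finset.range M, (A ^ m - A ^ (m + 1)) := by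
    rw [Finset.mul_sum]
    refine Finset.sum_congr rfl fun m _ => ?_
    rw [sub_mul, one_mul, pow_succ']
  rw [this, Finset.sum_range_sub', pow_zero, hM, sub_zero]

/-- Unique decomposition of a list around an element missing from both prefixes. -/
lemma decomp_unique {α : Type*} {j : α} : ∀ {p₀ p₀' q q' : List α},
    p₀ ++ j :: q = p₀' ++ j :: q' → j ∉ p₀ → j ∉ p₀' → p₀ = p₀' ∧ q = q' := by
  intro p₀
  induction p₀ with
  | nil =>
      rintro (_ | ⟨x, t⟩) q q' h hj hj'
      · simpa using h
      · simp at h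
        exact absurd (h.1 ▸ List.mem_cons_self (a := x) (l := t)) (h.1 ▸ hj')
  | cons x p₀ ih =>
      rintro (_ | ⟨y, t⟩) q q' h hj hj'
      · simp at h
        exact absurd (h.1 ▸ List.mem_cons_self (a := x) (l := p₀)) (h.1 ▸ hj)
      · simp only [List.cons_append, List.cons.injEq] at h
        obtain ⟨rfl, h⟩ := h
        obtain ⟨h1, h2⟩ := ih h (fun hm => hj (List.mem_cons_of_mem _ hm))
          (fun hm => hj' (List.mem_cons_of_mem _ hm))
        exact ⟨by rw [h1], h2⟩

/-- The set of all path lists from `j` to `k`. -/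
noncomputable def PF (A : Matrix (Fin n) (Fin n) ℚ) (M : ℕ) (j k : Fin n) : Finset (List (Fin n)) :=
  (Finset.range M).biUnion fun m => pf A m j k

lemma mem_PF {A : Matrix (Fin n) (Fin n) ℚ} (h01 : ∀ j k, A j k = 0 ∨ A j k = 1)
    {M : ℕ} (hM : A ^ M = 0) {j k : Fin n} {l : List (Fin n)} :
    l ∈ PF A M j k ↔ IsPathList A j k l := by
  simp only [PF, Finset.mem_biUnion, Finset.mem_range, mem_pf]
  constructor
  · rintro ⟨m, -, hp, -⟩; exact hp
  · intro hp; exact ⟨l.length, length_lt h01 hM hp, hp, rfl⟩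

lemma card_PF {A : Matrix (Fin n) (Fin n) ℚ} (h01 : ∀ j k, A j k = 0 ∨ A j k = 1)
    {M : ℕ} (hM : A ^ M = 0) (j k : Fin n) :
    ((PF A M j k).card : ℚ) = (1 - A)⁻¹ j k := by
  rw [inv_one_sub hM, Matrix.sum_apply, PF, Finset.card_biUnion]
  · push_cast
    exact Finset.sum_congr rfl fun m _ => card_pf h01 m j k
  · intro x _ y _ hxy
    rw [Function.onFun, Finset.disjoint_left]
    intro l hlx hly
    exact hxy ((mem_pf.mp hlx).2.symm.trans (mem_pf.mp hly).2)

lemma card_filter {A : Matrix (Fin n) (Fin n) ℚ} (h01 : ∀ j k, A j k = 0 ∨ A j k = 1)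
    {M : ℕ} (hM : A ^ M = 0) (hM0 : 0 < M) (s j k : Fin n) :
    ((PF A M s j) ×ˢ (PF A M j k)).card
      = ((PF A M s k).filter fun l => j ∈ s :: l).card := by
  apply Finset.card_bij (fun pq _ => pq.1 ++ pq.2)
  · rintro ⟨p, q⟩ h
    rw [Finset.mem_product] at h
    have hp := (mem_PF h01 hM).mp h.1
    have hq := (mem_PF h01 hM).mp h.2
    rw [Finset.mem_filter]
    refine ⟨(mem_PF h01 hM).mpr (path_append hp hq), ?_⟩
    have hjm : j ∈ s :: p := hp.2 ▸ List.getLast_mem (List.cons_ne_nil _ _)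
    rcases List.mem_cons.mp hjm with h' | h'
    · exact h' ▸ List.mem_cons_self
    · exact List.mem_cons_of_mem _ (List.mem_append_left _ h')
  · rintro ⟨p, q⟩ h1 ⟨p', q'⟩ h2 heq
    simp only at heq
    rw [Finset.mem_product] at h1 h2
    have hp := (mem_PF h01 hM).mp h1.1
    have hq := (mem_PF h01 hM).mp h1.2
    have hp' := (mem_PF h01 hM).mp h2.1
    have hq' := (mem_PF h01 hM).mp h2.2
    have hnd : (s :: (p ++ q)).Nodup := path_nodup h01 hM hM0 (path_append hp hq)
    have hnd' : (s :: (p' ++ q')).Nodup := path_nodup h01 hM hM0 (path_append hp' hq')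
    have key : ∀ {p q : List (Fin n)}, IsPathList A s j p → (s :: (p ++ q)).Nodup →
        p ≠ [] → p.dropLast ++ j :: q = p ++ q ∧ j ∉ p.dropLast := by
      intro p q hp hnd hne
      have hlast : p.getLast hne = j := by
        rw [← List.getLast_cons (a := s) hne]; exact hp.2
      constructor
      · conv_lhs => rw [show (j :: q) = [j] ++ q from rfl]
        rw [← List.append_assoc,
          show p.dropLast ++ [j] = p by rw [← hlast]; exact List.dropLast_append_getLast hne]
      · intro hjm
        have h2 : (p ++ q).Nodup := (List.nodup_cons.mp hnd).2
        have : p.Nodup := (List.nodup_append.mp h2).1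
        rw [← List.dropLast_append_getLast hne, hlast, List.nodup_append'] at this
        exact (this.2.2 hjm) (List.mem_singleton_self j)
    by_cases hpe : p = []
    · have hjs : j = s := by
        subst hpe; simpa using hp.2.symm
      have hpe' : p' = [] := by
        by_contra hne'
        obtain ⟨-, hdl'⟩ := key hp' hnd' hne'
        have hlast' : p'.getLast hne' = j := by
          rw [← List.getLast_cons (a := s) hne']; exact hp'.2
        have hjm : j ∈ p' ++ q' := List.mem_append_left _ (hlast' ▸ List.getLast_mem hne')
        exact (List.nodup_cons.mp hnd').1 (hjs ▸ hjm)
      subst hpe; subst hpe'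
      simpa using heq
    · have hpe' : p' ≠ [] := by
        intro hc
        have hjs : j = s := by subst hc; simpa using hp'.2.symm
        obtain ⟨-, hdl⟩ := key hp hnd hpe
        have hlast : p.getLast hpe = j := by
          rw [← List.getLast_cons (a := s) hpe]; exact hp.2
        have hjm : j ∈ p ++ q := List.mem_append_left _ (hlast ▸ List.getLast_mem hpe)
        exact (List.nodup_cons.mp hnd).1 (hjs ▸ hjm)
      obtain ⟨hd, hj1⟩ := key hp hnd hpe
      obtain ⟨hd', hj1'⟩ := key hp' hnd' hpe'
      have heq2 : p.dropLast ++ j :: q = p'.dropLast ++ j :: q' := by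
        rw [hd, hd', heq]
      obtain ⟨e1, e2⟩ := decomp_unique heq2 hj1 hj1'
      have ep : p = p' := by
        have := congrArg (· ++ [j]) e1
        simpa [List.dropLast_append_getLast,
          show p.dropLast ++ [j] = p by
            rw [show j = p.getLast hpe by rw [← List.getLast_cons (a := s) hpe]; exact hp.2.symm]
            exact List.dropLast_append_getLast hpe,
          show p'.dropLast ++ [j] = p' by
            rw [show j = p'.getLast hpe' by rw [← List.getLast_cons (a := s) hpe']; exact hp'.2.symm]
            exact List.dropLast_append_getLast hpe'] using this
      exact Prod.ext ep e2
  · intro r hr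
    rw [Finset.mem_filter] at hr
    obtain ⟨hrm, hjr⟩ := hr
    have hrp := (mem_PF h01 hM).mp hrm
    rcases List.mem_cons.mp hjr with hjs | hjm
    · refine ⟨([], r), ?_, by simp⟩
      rw [Finset.mem_product]
      refine ⟨(mem_PF h01 hM).mpr ⟨List.Chain.nil, by simpa using hjs.symm⟩, ?_⟩
      exact (mem_PF h01 hM).mpr (hjs ▸ hrp)
    · obtain ⟨p₀, q, rfl⟩ := List.append_of_mem hjm
      obtain ⟨h1, h2⟩ := path_split hrp
      refine ⟨(p₀ ++ [j], q), ?_, by simp⟩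
      rw [Finset.mem_product]
      exact ⟨(mem_PF h01 hM).mpr h1, (mem_PF h01 hM).mpr h2⟩

end Stmt1Aux

open Stmt1Aux in
theorem stmt1 {n : ℕ} (A : Matrix (Fin n) (Fin n) ℚ)
    (h01 : ∀ j k, A j k = 0 ∨ A j k = 1) (hnil : IsNilpotent A) (s : Fin n)
    (hs : ∀ u, A u s = 0) (hunique : ∀ v, (∀ u, A u v = 0) → v = s) :
    ∀ j k, Dominates A s j k ↔ (1 - A)⁻¹ s k = (1 - A)⁻¹ s j * (1 - A)⁻¹ j k := by
  obtain ⟨M₀, hM₀⟩ := hnil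
  set M := M₀ + 1 with hMdef
  have hM : A ^ M = 0 := by rw [hMdef, pow_succ, hM₀, zero_mul]
  have hM0 : 0 < M := Nat.succ_pos _
  intro j k
  have hcount : (((PF A M s j) ×ˢ (PF A M j k)).card : ℚ)
      = (1 - A)⁻¹ s j * (1 - A)⁻¹ j k := by
    rw [Finset.card_product]
    push_cast
    rw [card_PF h01 hM, card_PF h01 hM]
  constructor
  · intro hdom
    have hfull : (PF A M s k).filter (fun l => j ∈ s :: l) = PF A M s k :=
      Finset.filter_eq_self.mpr fun l hl => hdom l ((mem_PF h01 hM).mp hl)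
    rw [← card_PF h01 hM s k, ← hfull, ← card_filter h01 hM hM0 s j k, hcount]
  · intro heq
    have hcard : ((PF A M s k).filter (fun l => j ∈ s :: l)).card = (PF A M s k).card := by
      have : (((PF A M s k).filter (fun l => j ∈ s :: l)).card : ℚ) = ((PF A M s k).card : ℚ) := by
        rw [← card_filter h01 hM hM0 s j k, hcount, ← heq, card_PF h01 hM]
      exact_mod_cast this
    have hfe : (PF A M s k).filter (fun l => j ∈ s :: l) = PF A M s k :=
      Finset.eq_of_subset_of_card_le (Finset.filter_subset _ _) (le_of_eq hcard.symm)
    intro l hl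
    have := hfe ▸ (mem_PF h01 hM).mpr hl
    exact (Finset.mem_filter.mp this).2
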